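/- Let M ∈ Sym⁺(2) (a symmetric positive definite 2×2 matrix), N a real 2×2 matrix, and α > 0. Denote by X♭ the 3×3 matrix with 2×2 upper-left block X and zeros elsewhere, and let X̂ = X♭ + e₃⊗e₃. Then ((α²M)^)^{-1/2} · (αN)♭ = (M̂)^{-1/2} · N♭, i.e. the plate bending tensor √(Î_m⁻¹)·II_m♭ is invariant under the scaling (I_m, II_m) ↦ (α²·I_m, α·II_m). Consequently, for a planar reference configuration, the bending tensor R_∞♭ of the constrained Cosserat plate model is invariant under the scaling m ↦ α·m of the midsurface deformation, while the Koiter bending tensor II_m♭ scales by the factor α. -/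

import Mathlib

open Matrix

/-- The 3×3 lift `X♭` of a 2×2 matrix `X`: upper-left block `X`, zeros elsewhere. -/
def flat (X : Matrix (Fin 2) (Fin 2) ℝ) : Matrix (Fin 3) (Fin 3) ℝ :=
  Matrix.reindex finSumFinEquiv finSumFinEquiv
    (Matrix.fromBlocks X 0 0 (0 : Matrix (Fin 1) (Fin 1) ℝ))

open scoped ComplexOrder in
/-- The positive semidefinite square root, as `Matrix.PosSemidef.sqrt` was defined in the
older Mathlib (removed since). -/
noncomputable def Matrix.PosSemidef.sqrt {n : Type*} [Fintype n] [DecidableEq n] {𝕜 : Type*}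
    [RCLike 𝕜] {A : Matrix n n 𝕜} (hA : A.PosSemidef) : Matrix n n 𝕜 :=
  (hA.1.eigenvectorUnitary : Matrix n n 𝕜) *
    diagonal (fun i => ((√(hA.1.eigenvalues i) : ℝ) : 𝕜)) *
    (star hA.1.eigenvectorUnitary : Matrix n n 𝕜)

/-- The lift `X̂ = X♭ + e₃⊗e₃`. -/
def hat (X : Matrix (Fin 2) (Fin 2) ℝ) : Matrix (Fin 3) (Fin 3) ℝ :=
  flat X + vecMulVec ![0, 0, 1] ![0, 0, 1]

lemma Matrix.PosSemidef.posSemidef_sqrt {n : Type*} [Fintype n] [DecidableEq n]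
    {A : Matrix n n ℝ} (hA : A.PosSemidef) : hA.sqrt.PosSemidef := by
  unfold Matrix.PosSemidef.sqrt
  have hD : (diagonal (fun i => ((√(hA.1.eigenvalues i) : ℝ) : ℝ))).PosSemidef :=
    posSemidef_diagonal_iff.2 fun i => Real.sqrt_nonneg _
  simpa [Matrix.star_eq_conjTranspose] using
    hD.mul_mul_conjTranspose_same (hA.1.eigenvectorUnitary : Matrix n n ℝ)

lemma Matrix.PosSemidef.sqrt_mul_self {n : Type*} [Fintype n] [DecidableEq n]
    {A : Matrix n n ℝ} (hA : A.PosSemidef) : hA.sqrt * hA.sqrt = A := by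
  unfold Matrix.PosSemidef.sqrt
  set U := hA.1.eigenvectorUnitary
  have hU : (star U : Matrix n n ℝ) * U = 1 := Unitary.coe_star_mul_self U
  have hDD : diagonal (fun i => ((√(hA.1.eigenvalues i) : ℝ) : ℝ)) *
      diagonal (fun i => ((√(hA.1.eigenvalues i) : ℝ) : ℝ)) =
      diagonal (RCLike.ofReal ∘ hA.1.eigenvalues) := by
    rw [diagonal_mul_diagonal]
    congr 1; funext i
    simp [Real.mul_self_sqrt (hA.eigenvalues_nonneg i)]
  calc (U : Matrix n n ℝ) * diagonal (fun i => ((√(hA.1.eigenvalues i) : ℝ) : ℝ)) *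
        (star U : Matrix n n ℝ) * ((U : Matrix n n ℝ) *
        diagonal (fun i => ((√(hA.1.eigenvalues i) : ℝ) : ℝ)) * (star U : Matrix n n ℝ))
      = (U : Matrix n n ℝ) * (diagonal (fun i => ((√(hA.1.eigenvalues i) : ℝ) : ℝ)) *
        ((star U : Matrix n n ℝ) * U) *
        diagonal (fun i => ((√(hA.1.eigenvalues i) : ℝ) : ℝ))) * (star U : Matrix n n ℝ) := by
        simp only [Matrix.mul_assoc]
    _ = A := by
        rw [hU, Matrix.mul_one, hDD]
        conv_rhs => rw [hA.1.spectral_theorem]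
        rfl

open scoped MatrixOrder in
lemma Matrix.PosSemidef.eq_sqrt_of_sq_eq {n : Type*} [Fintype n] [DecidableEq n]
    {A B : Matrix n n ℝ} (hB : B.PosSemidef) (hA : A.PosSemidef) (h : B ^ 2 = A) :
    B = hA.sqrt := by
  have h1 : CFC.sqrt A = B := CFC.sqrt_unique (by rw [← h, pow_two]) hB.nonneg
  have h2 : CFC.sqrt A = hA.sqrt :=
    CFC.sqrt_unique hA.sqrt_mul_self hA.posSemidef_sqrt.nonneg
  rw [← h1, h2]

lemma fsf0 : (finSumFinEquiv.symm (0 : Fin 3) : Fin 2 ⊕ Fin 1) = Sum.inl 0 := rfl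
lemma fsf1 : (finSumFinEquiv.symm (1 : Fin 3) : Fin 2 ⊕ Fin 1) = Sum.inl 1 := rfl
lemma fsf2 : (finSumFinEquiv.symm (2 : Fin 3) : Fin 2 ⊕ Fin 1) = Sum.inr 0 := rfl

/-- `hat` as a reindexed block matrix. -/
lemma hat_eq (X : Matrix (Fin 2) (Fin 2) ℝ) :
    hat X = Matrix.reindex finSumFinEquiv finSumFinEquiv
      (Matrix.fromBlocks X 0 0 (1 : Matrix (Fin 1) (Fin 1) ℝ)) := by
  ext i j
  fin_cases i <;> fin_cases j <;>
    simp [hat, flat, vecMulVec_apply, Matrix.reindex_apply, Matrix.submatrix_apply,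
      fsf0, fsf1, fsf2]

lemma flat_smul (a : ℝ) (X : Matrix (Fin 2) (Fin 2) ℝ) :
    flat (a • X) = a • flat X := by
  unfold flat
  rw [show Matrix.fromBlocks (a • X) 0 0 (0 : Matrix (Fin 1) (Fin 1) ℝ)
      = a • Matrix.fromBlocks X 0 0 (0 : Matrix (Fin 1) (Fin 1) ℝ) by
    rw [Matrix.fromBlocks_smul]; simp]
  rfl

lemma hat_mul_hat (A B : Matrix (Fin 2) (Fin 2) ℝ) :
    hat A * hat B = hat (A * B) := by
  simp only [hat_eq, Matrix.reindex_apply]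
  rw [Matrix.submatrix_mul_equiv, Matrix.fromBlocks_multiply]
  simp

lemma hat_mul_flat (A B : Matrix (Fin 2) (Fin 2) ℝ) :
    hat A * flat B = flat (A * B) := by
  simp only [hat_eq, flat, Matrix.reindex_apply]
  rw [Matrix.submatrix_mul_equiv, Matrix.fromBlocks_multiply]
  simp

lemma hat_one : hat (1 : Matrix (Fin 2) (Fin 2) ℝ) = 1 := by
  rw [hat_eq, Matrix.fromBlocks_one]
  simp

lemma hat_posSemidef {A : Matrix (Fin 2) (Fin 2) ℝ} (hA : A.PosSemidef) :
    (hat A).PosSemidef := by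
  rw [hat_eq, Matrix.reindex_apply]
  rw [Matrix.posSemidef_submatrix_equiv]
  have hD : (1 : Matrix (Fin 1) (Fin 1) ℝ).PosDef := Matrix.PosDef.one
  haveI : Invertible (1 : Matrix (Fin 1) (Fin 1) ℝ) := invertibleOne
  rw [show Matrix.fromBlocks A 0 0 (1 : Matrix (Fin 1) (Fin 1) ℝ)
      = Matrix.fromBlocks A (0 : Matrix (Fin 2) (Fin 1) ℝ)
          (0 : Matrix (Fin 2) (Fin 1) ℝ)ᴴ 1 by simp]
  rw [Matrix.PosDef.fromBlocks₂₂ _ _ hD]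
  simpa using hA

lemma posSemidef_smul {A : Matrix (Fin 2) (Fin 2) ℝ} (hA : A.PosSemidef)
    {c : ℝ} (hc : 0 ≤ c) : (c • A).PosSemidef := by
  refine ⟨?_, fun x => ?_⟩
  · rw [Matrix.IsHermitian, Matrix.conjTranspose_smul, star_trivial, hA.1.eq]
  · exact (hA.smul hc).2 x

/-- scaling invariance of the plate bending tensor: for `M ∈ Sym⁺(2)`,
`N` a 2×2 matrix and `α > 0`,
`((α²M)^)^{-1/2}·(αN)♭ = (M̂)^{-1/2}·N♭`, i.e. `√(Î_m⁻¹)·II_m♭` is invariant under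
`(I_m, II_m) ↦ (α² I_m, α II_m)`; the Koiter bending tensor scales by `α`:
`(αN)♭ = α·N♭`. -/
theorem plate_bending_scaling_invariance (M N : Matrix (Fin 2) (Fin 2) ℝ)
    (hM : M.PosDef) (α : ℝ) (hα : 0 < α) :
    (∀ (h1 : (hat (α ^ 2 • M)).PosSemidef) (h2 : (hat M).PosSemidef),
      (h1.sqrt)⁻¹ * flat (α • N) = (h2.sqrt)⁻¹ * flat N) ∧
    flat (α • N) = α • flat N := by
  refine ⟨fun h1 h2 => ?_, flat_smul α N⟩
  set S := hM.posSemidef.sqrt with hS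
  have hSpsd : S.PosSemidef := hM.posSemidef.posSemidef_sqrt
  have hSS : S * S = M := hM.posSemidef.sqrt_mul_self
  -- S is invertible
  have hdet : IsUnit S.det := by
    have : S.det * S.det = M.det := by rw [← Matrix.det_mul, hSS]
    refine isUnit_iff_ne_zero.2 fun h => ?_
    rw [h, mul_zero] at this
    exact (ne_of_gt hM.det_pos) this.symm
  have hSinv : S * S⁻¹ = 1 := Matrix.mul_nonsing_inv S hdet
  -- h2.sqrt = hat S
  have e2 : hat S = h2.sqrt := by
    refine (hat_posSemidef hSpsd).eq_sqrt_of_sq_eq h2 ?_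
    rw [pow_two, hat_mul_hat, hSS]
  -- h1.sqrt = hat (α • S)
  have e1 : hat (α • S) = h1.sqrt := by
    refine (hat_posSemidef (posSemidef_smul hSpsd hα.le)).eq_sqrt_of_sq_eq h1 ?_
    rw [pow_two, hat_mul_hat]
    rw [Matrix.smul_mul, Matrix.mul_smul, hSS, smul_smul, pow_two]
  -- inverses
  have inv2 : (h2.sqrt)⁻¹ = hat S⁻¹ := by
    rw [← e2]
    exact Matrix.inv_eq_right_inv (by rw [hat_mul_hat, hSinv, hat_one])
  have inv1 : (h1.sqrt)⁻¹ = hat (α⁻¹ • S⁻¹) := by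
    rw [← e1]
    refine Matrix.inv_eq_right_inv ?_
    rw [hat_mul_hat, Matrix.smul_mul, Matrix.mul_smul, hSinv, smul_smul,
      mul_inv_cancel₀ hα.ne', one_smul, hat_one]
  rw [inv1, inv2, hat_mul_flat, hat_mul_flat, Matrix.smul_mul, Matrix.mul_smul,
    smul_smul, inv_mul_cancel₀ hα.ne', one_smul]
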